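/- (Nakao's difference inequality.) Let φ : [0,∞) → [0,∞) be a function for which there exists a constant K > 0 such that sup_{t ≤ s ≤ t+1} φ(s) ≤ K (φ(t) − φ(t+1)) for every t ≥ 0. Then there exist constants A > 0 and B > 0 such that φ(t) ≤ A e^{−Bt} for all t ≥ 0. -/

import Mathlib

/-- Nakao's difference inequality: if `φ : [0,∞) → [0,∞)` satisfies
`sup_{t ≤ s ≤ t+1} φ(s) ≤ K (φ(t) - φ(t+1))` for every `t ≥ 0` and some constant
`K > 0`, then `φ` decays exponentially: `φ(t) ≤ A e^{-Bt}` for some `A, B > 0`. -/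
theorem nakao_difference_inequality
    (φ : ℝ → ℝ) (hφ : ∀ t ≥ (0:ℝ), 0 ≤ φ t)
    (K : ℝ) (hK : 0 < K)
    (h : ∀ t ≥ (0:ℝ), ∀ s : ℝ, t ≤ s → s ≤ t + 1 → φ s ≤ K * (φ t - φ (t + 1))) :
    ∃ A > (0:ℝ), ∃ B > (0:ℝ), ∀ t ≥ (0:ℝ), φ t ≤ A * Real.exp (-B * t) := by
  have hK1 : (0:ℝ) < K + 1 := by linarith
  set B : ℝ := Real.log ((K + 1) / K) with hB
  have hBpos : 0 < B := Real.log_pos (by rw [lt_div_iff₀ hK]; linarith)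
  have hexp : Real.exp (-B) = K / (K + 1) := by
    rw [Real.exp_neg, hB, Real.exp_log (by positivity)]; exact inv_div _ _
  -- decay at integers
  have hint : ∀ n : ℕ, φ n ≤ Real.exp (-B * n) * φ 0 := by
    intro n
    induction n with
    | zero => simp
    | succ n ih =>
      have hn0 : (0:ℝ) ≤ (n:ℝ) := Nat.cast_nonneg n
      have h1 := h n hn0 ((n:ℝ) + 1) (by linarith) le_rfl
      have hstep : φ ((n:ℝ) + 1) ≤ (K / (K + 1)) * φ n := by
        rw [div_mul_eq_mul_div, le_div_iff₀ hK1]; nlinarith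
      have hφ0 : 0 ≤ φ 0 := hφ 0 le_rfl
      calc φ ((n:ℕ) + 1 : ℕ) = φ ((n:ℝ) + 1) := by push_cast; ring_nf
        _ ≤ (K / (K + 1)) * φ n := hstep
        _ ≤ Real.exp (-B) * (Real.exp (-B * n) * φ 0) := by
            rw [hexp]
            exact mul_le_mul_of_nonneg_left ih (by positivity)
        _ = Real.exp (-B * ((n:ℕ) + 1 : ℕ)) * φ 0 := by
            rw [← mul_assoc, ← Real.exp_add]; push_cast; ring_nf
  refine ⟨(K + 1) * (φ 0 + 1), mul_pos hK1 (by linarith [hφ 0 le_rfl]), B, hBpos, fun t ht => ?_⟩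
  set n : ℕ := ⌊t⌋₊ with hn
  have hnt : (n:ℝ) ≤ t := Nat.floor_le ht
  have htn : t < (n:ℝ) + 1 := Nat.lt_floor_add_one t
  have hn0 : (0:ℝ) ≤ (n:ℝ) := Nat.cast_nonneg n
  have h1 := h n hn0 t hnt htn.le
  have hφn1 : 0 ≤ φ ((n:ℝ) + 1) := hφ _ (by linarith)
  have hφ0 : 0 ≤ φ 0 := hφ 0 le_rfl
  have h2 : φ t ≤ K * φ n := by nlinarith
  have h3 : φ t ≤ K * (Real.exp (-B * n) * φ 0) :=
    h2.trans (mul_le_mul_of_nonneg_left (hint n) hK.le)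
  have h4 : Real.exp (-B * n) ≤ Real.exp (-B * t) * Real.exp B := by
    rw [← Real.exp_add]
    apply Real.exp_le_exp.2
    nlinarith
  have hexpB : Real.exp B = (K + 1) / K := Real.exp_log (by positivity)
  calc φ t ≤ K * (Real.exp (-B * n) * φ 0) := h3
    _ ≤ K * ((Real.exp (-B * t) * Real.exp B) * φ 0) := by
        apply mul_le_mul_of_nonneg_left _ hK.le
        exact mul_le_mul_of_nonneg_right h4 hφ0
    _ = (K + 1) * φ 0 * Real.exp (-B * t) := by
        rw [hexpB]; field_simp
    _ ≤ (K + 1) * (φ 0 + 1) * Real.exp (-B * t) := by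
        have := Real.exp_pos (-B * t)
        nlinarith
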